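/- Let n be a positive integer, A an n×n real symmetric positive semidefinite matrix, λ ≥ 0, and let R : ℝ → (n×n real matrices) be a matrix-valued function that is differentiable at t₀ with derivative R′, such that R(t₀) is symmetric positive definite. Define S(t) = (I + λ R(t) A)⁻¹. Then the map t ↦ R(t)⁻¹ (I − S(t)) is differentiable at t₀ with derivative −(I − S(t₀))ᵀ R(t₀)⁻¹ R′ R(t₀)⁻¹ (I − S(t₀)). -/

import Mathlib

open Matrix

section LinftyAux
attribute [local instance] Matrix.linftyOpNormedAddCommGroup Matrix.linftyOpNormedSpace
  Matrix.linftyOpNormedRing Matrix.linftyOpNormedAlgebra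

theorem matrix_hasDerivAt_of_entries' {n : ℕ} {M : ℝ → Matrix (Fin n) (Fin n) ℝ}
    {M' : Matrix (Fin n) (Fin n) ℝ} {t₀ : ℝ}
    (hM : ∀ i j, HasDerivAt (fun t => M t i j) (M' i j) t₀) :
    HasDerivAt M M' t₀ := by
  have step1 : ∀ i, HasDerivAt (fun t => (M t i : Fin n → ℝ)) (M' i) t₀ := by
    intro i
    exact hasDerivAt_pi.2 (hM i)
  exact (hasDerivAt_pi (E' := fun _ : Fin n => (Fin n → ℝ))
    (φ := M) (φ' := M') (x := t₀)).2 step1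

theorem matrix_entries_of_hasDerivAt' {n : ℕ} {M : ℝ → Matrix (Fin n) (Fin n) ℝ}
    {M' : Matrix (Fin n) (Fin n) ℝ} {t₀ : ℝ}
    (hM : HasDerivAt M M' t₀) (i j : Fin n) :
    HasDerivAt (fun t => M t i j) (M' i j) t₀ := by
  have h2 : HasDerivAt (fun t => (M t i : Fin n → ℝ)) (M' i) t₀ :=
    (hasDerivAt_pi (E' := fun _ : Fin n => (Fin n → ℝ))
      (φ := M) (φ' := M') (x := t₀)).1 hM i
  exact hasDerivAt_pi.1 h2 j

theorem matrix_inv_hasDerivAt_entry' {n : ℕ} {M : ℝ → Matrix (Fin n) (Fin n) ℝ}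
    {M' : Matrix (Fin n) (Fin n) ℝ} {t₀ : ℝ}
    (hM : ∀ i j, HasDerivAt (fun t => M t i j) (M' i j) t₀)
    (hU : IsUnit (M t₀)) (i j : Fin n) :
    HasDerivAt (fun t => (M t)⁻¹ i j)
      ((-((M t₀)⁻¹ * M' * (M t₀)⁻¹)) i j) t₀ := by
  haveI : CompleteSpace (Matrix (Fin n) (Fin n) ℝ) :=
    FiniteDimensional.complete ℝ (Matrix (Fin n) (Fin n) ℝ)
  have hM2 : HasDerivAt M M' t₀ := matrix_hasDerivAt_of_entries' hM
  have h3 := (hasFDerivAt_ringInverse (𝕜 := ℝ) hU.unit).comp_hasDerivAt t₀ hM2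
  have key : (↑hU.unit⁻¹ : Matrix (Fin n) (Fin n) ℝ) = (M t₀)⁻¹ := by
    rw [Matrix.coe_units_inv, hU.unit_spec]
  have h4 : HasDerivAt (fun t => Ring.inverse (M t))
      (-((M t₀)⁻¹ * M' * (M t₀)⁻¹)) t₀ := by
    refine HasDerivAt.congr_deriv h3 ?_
    simp [ContinuousLinearMap.mulLeftRight_apply, key]
  have h5 : HasDerivAt (fun t => (M t)⁻¹) (-((M t₀)⁻¹ * M' * (M t₀)⁻¹)) t₀ := by
    simpa only [Matrix.nonsing_inv_eq_ringInverse] using h4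
  exact matrix_entries_of_hasDerivAt' h5 i j
end LinftyAux

attribute [local instance] Matrix.normedAddCommGroup Matrix.normedSpace

theorem matrix_hasDerivAt_iff_entries {n : ℕ} {M : ℝ → Matrix (Fin n) (Fin n) ℝ}
    {M' : Matrix (Fin n) (Fin n) ℝ} {t₀ : ℝ} :
    HasDerivAt M M' t₀ ↔ ∀ i j, HasDerivAt (fun t => M t i j) (M' i j) t₀ := by
  constructor
  · intro h i j
    exact hasDerivAt_pi.1 ((hasDerivAt_pi (E' := fun _ : Fin n => (Fin n → ℝ))
      (φ := M) (φ' := M') (x := t₀)).1 h i) j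
  · intro h
    exact (hasDerivAt_pi (E' := fun _ : Fin n => (Fin n → ℝ))
      (φ := M) (φ' := M') (x := t₀)).2 fun i => hasDerivAt_pi.2 (h i)

/-- Derivative of `R(t)⁻¹(I − S(t))` along a differentiable path of working
correlation matrices:
`∂{R⁻¹(I−S)} = −(I − S)ᵀ R⁻¹ R′ R⁻¹ (I − S)`. -/
theorem smoother_deriv_in_R
    (n : ℕ) (hn : 0 < n)
    (A : Matrix (Fin n) (Fin n) ℝ) (hA : A.PosSemidef)
    (lam : ℝ) (hlam : 0 ≤ lam)
    (R : ℝ → Matrix (Fin n) (Fin n) ℝ)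
    (R' : Matrix (Fin n) (Fin n) ℝ)
    (t₀ : ℝ)
    (hRdiff : HasDerivAt R R' t₀)
    (hRpos : (R t₀).PosDef)
    (S : ℝ → Matrix (Fin n) (Fin n) ℝ)
    (hS : ∀ t : ℝ, S t = ((1 : Matrix (Fin n) (Fin n) ℝ) + lam • (R t * A))⁻¹) :
    HasDerivAt (fun t => (R t)⁻¹ * (1 - S t))
      (-((1 - S t₀)ᵀ * (R t₀)⁻¹ * R' * (R t₀)⁻¹ * (1 - S t₀))) t₀ := by
  classical
  set M : ℝ → Matrix (Fin n) (Fin n) ℝ :=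
    fun t => (1 : Matrix (Fin n) (Fin n) ℝ) + lam • (R t * A) with hMdef
  set Md : Matrix (Fin n) (Fin n) ℝ := lam • (R' * A) with hMddef
  -- entrywise derivative of R
  have hRent : ∀ i j, HasDerivAt (fun t => R t i j) (R' i j) t₀ :=
    matrix_hasDerivAt_iff_entries.1 hRdiff
  -- entrywise derivative of M
  have hMent : ∀ i j, HasDerivAt (fun t => M t i j) (Md i j) t₀ := by
    intro i j
    have h1 : HasDerivAt (fun t => ∑ k, R t i k * A k j) (∑ k, R' i k * A k j) t₀ :=
      HasDerivAt.fun_sum fun k _ => (hRent i k).mul_const (A k j)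
    have h2 := (h1.const_mul lam).const_add ((1 : Matrix (Fin n) (Fin n) ℝ) i j)
    have hfun : (fun t => M t i j)
        = fun t => (1 : Matrix (Fin n) (Fin n) ℝ) i j + lam * ∑ k, R t i k * A k j := by
      funext t
      simp [hMdef, Matrix.add_apply, Matrix.smul_apply, Matrix.mul_apply, smul_eq_mul,
        Finset.mul_sum]
    have hval : Md i j = lam * ∑ k, R' i k * A k j := by
      simp [hMddef, Matrix.smul_apply, Matrix.mul_apply, smul_eq_mul, Finset.mul_sum]
    rw [hfun, hval]
    exact h2
  -- invertibility of R t₀ and M t₀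
  have hRdet : IsUnit (R t₀).det := hRpos.det_pos.ne'.isUnit
  have hlamA : (lam • A).PosSemidef := by
    refine ⟨?_, fun x => ?_⟩
    · have h := hA.1
      rw [Matrix.IsHermitian] at h ⊢
      rw [Matrix.conjTranspose_smul, h]
      norm_num
    · simpa [Finsupp.mul_sum, mul_assoc, mul_left_comm] using smul_nonneg hlam (hA.2 x)
  have hsum : ((R t₀)⁻¹ + lam • A).PosDef := hRpos.inv.add_posSemidef hlamA
  have hMfact : M t₀ = R t₀ * ((R t₀)⁻¹ + lam • A) := by
    rw [Matrix.mul_add, Matrix.mul_nonsing_inv _ hRdet, Matrix.mul_smul]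
  have hMU : IsUnit (M t₀) := by
    rw [hMfact]
    exact hRpos.isUnit.mul hsum.isUnit
  have hMdet : IsUnit (M t₀).det := (Matrix.isUnit_iff_isUnit_det _).1 hMU
  -- derivative of S entrywise
  set S₀ : Matrix (Fin n) (Fin n) ℝ := (M t₀)⁻¹ with hS₀def
  set D : Matrix (Fin n) (Fin n) ℝ := -(S₀ * Md * S₀) with hDdef
  have hSent : ∀ i j, HasDerivAt (fun t => S t i j) (D i j) t₀ := by
    intro i j
    have := matrix_inv_hasDerivAt_entry' hMent hMU i j
    simpa only [hS, hDdef, hS₀def, hMdef] using this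
  -- derivative of g = lam • (A * S)
  have hgent : ∀ i j, HasDerivAt (fun t => (lam • (A * S t)) i j) ((lam • (A * D)) i j) t₀ := by
    intro i j
    have h1 : HasDerivAt (fun t => ∑ k, A i k * S t k j) (∑ k, A i k * D k j) t₀ :=
      HasDerivAt.fun_sum fun k _ => (hSent k j).const_mul (A i k)
    have h2 := h1.const_mul lam
    have hfun : (fun t => (lam • (A * S t)) i j) = fun t => lam * ∑ k, A i k * S t k j := by
      funext t
      simp [Matrix.smul_apply, Matrix.mul_apply, smul_eq_mul, Finset.mul_sum]
    have hval : (lam • (A * D)) i j = lam * ∑ k, A i k * D k j := by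
      simp [Matrix.smul_apply, Matrix.mul_apply, smul_eq_mul, Finset.mul_sum]
    rw [hfun, hval]
    exact h2
  have hg : HasDerivAt (fun t => lam • (A * S t)) (lam • (A * D)) t₀ :=
    matrix_hasDerivAt_iff_entries.2 hgent
  -- eventual equality of f and g
  have hdetR : Filter.Tendsto (fun t => (R t).det) (nhds t₀) (nhds (R t₀).det) := by
    simp only [Matrix.det_apply']
    refine tendsto_finset_sum _ fun σ _ => Filter.Tendsto.const_mul _ ?_
    exact tendsto_finset_prod _ fun k _ => (hRent (σ k) k).continuousAt
  have hdetM : Filter.Tendsto (fun t => (M t).det) (nhds t₀) (nhds (M t₀).det) := by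
    simp only [Matrix.det_apply']
    refine tendsto_finset_sum _ fun σ _ => Filter.Tendsto.const_mul _ ?_
    exact tendsto_finset_prod _ fun k _ => (hMent (σ k) k).continuousAt
  have hevR : ∀ᶠ t in nhds t₀, (R t).det ≠ 0 := hdetR.eventually_ne hRdet.ne_zero
  have hevM : ∀ᶠ t in nhds t₀, (M t).det ≠ 0 := hdetM.eventually_ne hMdet.ne_zero
  have hkey : ∀ t : ℝ, (R t).det ≠ 0 → (M t).det ≠ 0 →
      (R t)⁻¹ * (1 - S t) = lam • (A * S t) := by
    intro t hRt hMt
    have hRu : IsUnit (R t).det := hRt.isUnit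
    have hMu : IsUnit (M t).det := hMt.isUnit
    have e1 : (1 : Matrix (Fin n) (Fin n) ℝ) - S t = (lam • (R t * A)) * S t := by
      rw [hS]
      calc (1 : Matrix (Fin n) (Fin n) ℝ) - (M t)⁻¹
          = M t * (M t)⁻¹ - 1 * (M t)⁻¹ := by
            rw [Matrix.mul_nonsing_inv _ hMu, one_mul]
        _ = (M t - 1) * (M t)⁻¹ := by rw [Matrix.sub_mul]
        _ = (lam • (R t * A)) * (M t)⁻¹ := by
            congr 1
            simp [hMdef]
    rw [hS] at e1 ⊢
    rw [e1, Matrix.smul_mul, Matrix.mul_smul]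
    congr 1
    rw [← Matrix.mul_assoc, ← Matrix.mul_assoc, Matrix.nonsing_inv_mul _ hRu, Matrix.one_mul]
  have hev : (fun t => (R t)⁻¹ * (1 - S t)) =ᶠ[nhds t₀] fun t => lam • (A * S t) := by
    filter_upwards [hevR, hevM] with t h1 h2
    exact hkey t h1 h2
  have hf : HasDerivAt (fun t => (R t)⁻¹ * (1 - S t)) (lam • (A * D)) t₀ :=
    hg.congr_of_eventuallyEq hev
  -- final algebraic identification of the derivative
  have hAS : (R t₀)⁻¹ * (1 - S t₀) = lam • (A * S t₀) :=
    hkey t₀ hRdet.ne_zero hMdet.ne_zero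
  have hRsymm : (R t₀)ᵀ = R t₀ := by
    have := hRpos.1
    rwa [Matrix.IsHermitian, Matrix.conjTranspose_eq_transpose_of_trivial] at this
  have hAsymm : Aᵀ = A := by
    have := hA.1
    rwa [Matrix.IsHermitian, Matrix.conjTranspose_eq_transpose_of_trivial] at this
  have hRinvT : ((R t₀)⁻¹)ᵀ = (R t₀)⁻¹ := by
    rw [Matrix.transpose_nonsing_inv, hRsymm]
  have e2 : (1 - S t₀)ᵀ * (R t₀)⁻¹ = lam • ((S t₀)ᵀ * A) := by
    have := congrArg Matrix.transpose hAS
    rw [Matrix.transpose_mul, hRinvT, Matrix.transpose_smul, Matrix.transpose_mul, hAsymm] at this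
    exact this
  -- e3 : (S t₀)ᵀ * A = A * S t₀
  have hMT : (M t₀)ᵀ = 1 + lam • (A * R t₀) := by
    simp [hMdef, Matrix.transpose_add, Matrix.transpose_smul, Matrix.transpose_mul,
      hAsymm, hRsymm]
  have hXdet : IsUnit ((M t₀)ᵀ).det := by rwa [Matrix.det_transpose]
  have hXA : (M t₀)ᵀ * A = A * M t₀ := by
    rw [hMT]
    simp [hMdef, Matrix.add_mul, Matrix.mul_add, Matrix.smul_mul, Matrix.mul_smul,
      Matrix.mul_assoc]
  have hSt0 : S t₀ = S₀ := by rw [hS]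
  have e3 : (S t₀)ᵀ * A = A * S t₀ := by
    rw [hSt0]
    have hst : S₀ᵀ = ((M t₀)ᵀ)⁻¹ := by
      rw [hS₀def, Matrix.transpose_nonsing_inv]
    rw [hst]
    calc ((M t₀)ᵀ)⁻¹ * A
        = ((M t₀)ᵀ)⁻¹ * (A * M t₀ * (M t₀)⁻¹) := by
          rw [Matrix.mul_assoc A, Matrix.mul_nonsing_inv _ hMdet, Matrix.mul_one]
      _ = ((M t₀)ᵀ)⁻¹ * ((M t₀)ᵀ * A * (M t₀)⁻¹) := by rw [hXA]
      _ = A * (M t₀)⁻¹ := by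
          rw [← Matrix.mul_assoc, ← Matrix.mul_assoc, Matrix.nonsing_inv_mul _ hXdet,
            Matrix.one_mul]
  have goal_eq : -((1 - S t₀)ᵀ * (R t₀)⁻¹ * R' * (R t₀)⁻¹ * (1 - S t₀))
      = lam • (A * D) := by
    rw [Matrix.mul_assoc ((1 - S t₀)ᵀ * (R t₀)⁻¹ * R') ((R t₀)⁻¹) (1 - S t₀)]
    rw [hAS, e2, e3]
    rw [hDdef, hMddef, hSt0]
    simp only [Matrix.smul_mul, Matrix.mul_smul, smul_smul, Matrix.mul_neg, Matrix.neg_mul,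
      smul_neg, neg_mul, mul_neg, Matrix.mul_assoc]
  rw [← goal_eq] at hf
  exact hf
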